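/- Let T be a finite tree with diameter at least 3, and let h ≥ p ≥ 1 be integers. Then λ_{h,p,p}(T) ≥ max{(Δ₂(T) − 1)·p, h + (Δ(T) − 1)·p}. -/

import Mathlib

open SimpleGraph

/-- An `L(h,p,p)`-labelling of `G` with span `ℓ`: labels in `{0,…,ℓ}`, labels of vertices at
distance 1 differ by at least `h`, labels of vertices at distance 2 or 3 differ by at least `p`. -/
def IsLLabelling {V : Type} (G : SimpleGraph V) (h p ℓ : ℕ) (f : V → ℕ) : Prop :=
  (∀ v, f v ≤ ℓ) ∧
  (∀ u v, G.dist u v = 1 → (h : ℤ) ≤ |(f u : ℤ) - (f v : ℤ)|) ∧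
  (∀ u v, G.dist u v = 2 ∨ G.dist u v = 3 → (p : ℤ) ≤ |(f u : ℤ) - (f v : ℤ)|)

/-- `λ_{h,p,p}(G)`: the minimum span of an `L(h,p,p)`-labelling of `G`. -/
noncomputable def lambdaNum {V : Type} (G : SimpleGraph V) (h p : ℕ) : ℕ :=
  sInf {ℓ : ℕ | ∃ f : V → ℕ, IsLLabelling G h p ℓ f}

/-- A circular interval modulo `n`: a set of residues of the form `{a, a+1, …, a+s}` mod `n`. -/
def IsCircInterval (n : ℕ) (I : Set (ZMod n)) : Prop :=
  ∃ (a : ZMod n) (s : ℕ), I = {x : ZMod n | ∃ i : ℕ, i ≤ s ∧ x = a + (i : ZMod n)}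

/-- An elegant `L(h,p,p)`-labelling: additionally each vertex `u` has a circular interval `I u`
modulo `ℓ+1` containing the labels of all neighbours of `u`, with `I u ∩ I v = ∅` for edges `uv`. -/
def IsElegantLLabelling {V : Type} (G : SimpleGraph V) (h p ℓ : ℕ) (f : V → ℕ) : Prop :=
  IsLLabelling G h p ℓ f ∧
  ∃ I : V → Set (ZMod (ℓ + 1)),
    (∀ u, IsCircInterval (ℓ + 1) (I u)) ∧
    (∀ u w, G.Adj u w → ((f w : ZMod (ℓ + 1)) ∈ I u)) ∧
    (∀ u v, G.Adj u v → I u ∩ I v = ∅)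

/-- `λ*_{h,p,p}(G)`: the minimum span of an elegant `L(h,p,p)`-labelling of `G`. -/
noncomputable def lambdaStar {V : Type} (G : SimpleGraph V) (h p : ℕ) : ℕ :=
  sInf {ℓ : ℕ | ∃ f : V → ℕ, IsElegantLLabelling G h p ℓ f}

/-- The `ℓ`-cyclic distance between labels `a` and `b`. -/
def cycDist (ℓ a b : ℕ) : ℤ :=
  min |(a : ℤ) - (b : ℤ)| ((ℓ : ℤ) - |(a : ℤ) - (b : ℤ)|)

/-- A `C(h,p,p)`-labelling of `G` with span `ℓ`: labels in `{0,…,ℓ-1}`, and the `ℓ`-cyclic distance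
between labels of vertices at distance 1 (resp. 2 or 3) is at least `h` (resp. `p`). -/
def IsCLabelling {V : Type} (G : SimpleGraph V) (h p ℓ : ℕ) (f : V → ℕ) : Prop :=
  (∀ v, f v < ℓ) ∧
  (∀ u v, G.dist u v = 1 → (h : ℤ) ≤ cycDist ℓ (f u) (f v)) ∧
  (∀ u v, G.dist u v = 2 ∨ G.dist u v = 3 → (p : ℤ) ≤ cycDist ℓ (f u) (f v))

/-- `σ_{h,p,p}(G)`: the minimum positive `ℓ` such that `G` has a `C(h,p,p)`-labelling of span `ℓ`. -/
noncomputable def sigmaNum {V : Type} (G : SimpleGraph V) (h p : ℕ) : ℕ :=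
  sInf {ℓ : ℕ | 0 < ℓ ∧ ∃ f : V → ℕ, IsCLabelling G h p ℓ f}

/-- An elegant `C(h,p,p)`-labelling: additionally each vertex `u` has a circular interval `I u`
modulo `ℓ` containing the labels of all neighbours of `u`, with `I u ∩ I v = ∅` for edges `uv`. -/
def IsElegantCLabelling {V : Type} (G : SimpleGraph V) (h p ℓ : ℕ) (f : V → ℕ) : Prop :=
  IsCLabelling G h p ℓ f ∧
  ∃ I : V → Set (ZMod ℓ),
    (∀ u, IsCircInterval ℓ (I u)) ∧
    (∀ u w, G.Adj u w → ((f w : ZMod ℓ) ∈ I u)) ∧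
    (∀ u v, G.Adj u v → I u ∩ I v = ∅)

/-- `σ*_{h,p,p}(G)`: the minimum positive `ℓ` such that `G` has an elegant `C(h,p,p)`-labelling
of span `ℓ`. -/
noncomputable def sigmaStar {V : Type} (G : SimpleGraph V) (h p : ℕ) : ℕ :=
  sInf {ℓ : ℕ | 0 < ℓ ∧ ∃ f : V → ℕ, IsElegantCLabelling G h p ℓ f}

/-- `Δ₂(G) = max over edges uv of (deg u + deg v)`. -/
noncomputable def deltaTwo {V : Type} (G : SimpleGraph V) [Fintype V] [DecidableRel G.Adj] : ℕ :=
  sSup {d : ℕ | ∃ u v : V, G.Adj u v ∧ d = G.degree u + G.degree v}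

section AuxHidden
open Finset



lemma lemA : ∀ (n : ℕ) (p : ℕ) (s : Finset ℕ) (hne : s.Nonempty), s.card = n + 1 →
    (∀ a ∈ s, ∀ b ∈ s, a ≠ b → (p : ℤ) ≤ |(a : ℤ) - (b : ℤ)|) →
    s.min' hne + n * p ≤ s.max' hne := by
  intro n
  induction n with
  | zero => intro p s hne _ _; simpa using s.min'_le _ (s.max'_mem hne)
  | succ n ih =>
    intro p s hne hcard hsep
    set m := s.max' hne with hm
    have hmmem : m ∈ s := s.max'_mem hne
    set s' := s.erase m with hs'
    have hcard' : s'.card = n + 1 := by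
      rw [hs', Finset.card_erase_of_mem hmmem, hcard]; omega
    have hne' : s'.Nonempty := Finset.card_pos.mp (by omega)
    have hsub : s' ⊆ s := Finset.erase_subset _ _
    have ihs := ih p s' hne' hcard' (fun a ha b hb hab => hsep a (hsub ha) b (hsub hb) hab)
    have hmax'mem : s'.max' hne' ∈ s' := s'.max'_mem hne'
    have h1 : s'.max' hne' + p ≤ m := by
      have hne2 : s'.max' hne' ≠ m := Finset.ne_of_mem_erase hmax'mem
      have hle : s'.max' hne' ≤ m := s.le_max' _ (hsub hmax'mem)
      have := hsep _ (hsub hmax'mem) m hmmem hne2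
      rcases abs_cases ((s'.max' hne' : ℤ) - (m : ℤ)) with ⟨heq, _⟩ | ⟨heq, _⟩ <;>
        rw [heq] at this <;> omega
    have h2 : s.min' hne ≤ s'.min' hne' := s.min'_le _ (hsub (s'.min'_mem hne'))
    calc s.min' hne + (n + 1) * p = s.min' hne + n * p + p := by ring
      _ ≤ s'.min' hne' + n * p + p := by omega
      _ ≤ s'.max' hne' + p := by omega
      _ ≤ m := h1

lemma lemA' (p : ℕ) (s : Finset ℕ) (hne : s.Nonempty)
    (hsep : ∀ a ∈ s, ∀ b ∈ s, a ≠ b → (p : ℤ) ≤ |(a : ℤ) - (b : ℤ)|) :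
    s.min' hne + (s.card - 1) * p ≤ s.max' hne := by
  obtain ⟨n, hn⟩ : ∃ n, s.card = n + 1 := ⟨s.card - 1, by have := hne.card_pos; omega⟩
  have := lemA n p s hne hn hsep
  rw [hn]; simpa using this

lemma lemB (p h ℓ : ℕ) (hp : 1 ≤ p) (hph : p ≤ h) (s : Finset ℕ) (hne : s.Nonempty) (t : ℕ)
    (hsep : ∀ a ∈ s, ∀ b ∈ s, a ≠ b → (p : ℤ) ≤ |(a : ℤ) - (b : ℤ)|)
    (hts : ∀ a ∈ s, (h : ℤ) ≤ |(t : ℤ) - (a : ℤ)|)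
    (hle : ∀ a ∈ s, a ≤ ℓ) (htle : t ≤ ℓ) :
    h + (s.card - 1) * p ≤ ℓ := by
  have hts' : ∀ a ∈ s, a < t → a + h ≤ t := by
    intro a ha hlt
    have := hts a ha
    rcases abs_cases ((t : ℤ) - (a : ℤ)) with ⟨heq, _⟩ | ⟨heq, _⟩ <;> rw [heq] at this <;> omega
  have hts'' : ∀ a ∈ s, t < a → t + h ≤ a := by
    intro a ha hlt
    have := hts a ha
    rcases abs_cases ((t : ℤ) - (a : ℤ)) with ⟨heq, _⟩ | ⟨heq, _⟩ <;> rw [heq] at this <;> omega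
  have htns : t ∉ s := by
    intro hmem
    have := hts t hmem
    simp at this; omega
  set x := s.min' hne with hx
  set y := s.max' hne with hy
  have hxy := lemA' p s hne hsep
  have hyle : y ≤ ℓ := hle _ (s.max'_mem hne)
  rcases lt_trichotomy t x with hlt | heq | hgt
  · have := hts'' x (s.min'_mem hne) hlt
    omega
  · exact absurd (heq ▸ s.min'_mem hne) htns
  · rcases lt_trichotomy t y with hlt | heq | hgt2
    · set s₁ := s.filter (fun a => a < t) with hs₁
      set s₂ := s.filter (fun a => ¬ a < t) with hs₂
      have hcards : s₁.card + s₂.card = s.card :=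
        Finset.card_filter_add_card_filter_not (p := fun a => a < t)
      have hxmem : x ∈ s₁ := Finset.mem_filter.mpr ⟨s.min'_mem hne, hgt⟩
      have hymem : y ∈ s₂ := Finset.mem_filter.mpr ⟨s.max'_mem hne, by omega⟩
      have hne₁ : s₁.Nonempty := ⟨x, hxmem⟩
      have hne₂ : s₂.Nonempty := ⟨y, hymem⟩
      have hsub₁ : s₁ ⊆ s := Finset.filter_subset _ _
      have hsub₂ : s₂ ⊆ s := Finset.filter_subset _ _
      have h₁ := lemA' p s₁ hne₁ (fun a ha b hb hab => hsep a (hsub₁ ha) b (hsub₁ hb) hab)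
      have h₂ := lemA' p s₂ hne₂ (fun a ha b hb hab => hsep a (hsub₂ ha) b (hsub₂ hb) hab)
      have hm₁ : s₁.max' hne₁ + h ≤ t :=
        hts' _ (hsub₁ (s₁.max'_mem hne₁)) (Finset.mem_filter.mp (s₁.max'_mem hne₁)).2
      have hm₂ : t + h ≤ s₂.min' hne₂ := by
        have hmem := s₂.min'_mem hne₂
        have hnlt : ¬ s₂.min' hne₂ < t := (Finset.mem_filter.mp hmem).2
        have hnet : s₂.min' hne₂ ≠ t := fun he => htns (he ▸ hsub₂ hmem)
        exact hts'' _ (hsub₂ hmem) (by omega)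
      have hmax2 : s₂.max' hne₂ ≤ ℓ := hle _ (hsub₂ (s₂.max'_mem hne₂))
      obtain ⟨a, ha⟩ : ∃ a, s₁.card = a + 1 := ⟨s₁.card - 1, by have := hne₁.card_pos; omega⟩
      obtain ⟨b, hb⟩ : ∃ b, s₂.card = b + 1 := ⟨s₂.card - 1, by have := hne₂.card_pos; omega⟩
      rw [ha, Nat.add_sub_cancel] at h₁
      rw [hb, Nat.add_sub_cancel] at h₂
      have hAeq : (s.card - 1) * p = a * p + (b * p + p) := by
        have hc : s.card - 1 = a + b + 1 := by omega
        rw [hc]; ring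
      rw [hAeq]
      omega
    · exact absurd (heq ▸ s.max'_mem hne) htns
    · have := hts' y (s.max'_mem hne) hgt2
      omega

variable {V : Type} {G : SimpleGraph V}

lemma tree_path_unique (hT : G.IsTree) {a b : V} (P Q : G.Walk a b)
    (hP : P.IsPath) (hQ : Q.IsPath) : P = Q :=
  ((hT.existsUnique_path a b).unique hP hQ)

lemma tree_no_triangle (hT : G.IsTree) {u v y : V} (huv : G.Adj u v) (huy : G.Adj u y)
    (hvy : G.Adj y v) : False := by
  have hP : (Walk.cons huv Walk.nil : G.Walk u v).IsPath := by
    simp [Walk.cons_isPath_iff, huv.ne]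
  have hQ : (Walk.cons huy (Walk.cons hvy Walk.nil) : G.Walk u v).IsPath := by
    simp [Walk.cons_isPath_iff, huv.ne, huy.ne, hvy.ne]
  have heq := tree_path_unique hT _ _ hP hQ
  have := congrArg Walk.length heq
  simp at this

lemma tree_dist_two (hT : G.IsTree) {u w₁ w₂ : V} (h1 : G.Adj u w₁) (h2 : G.Adj u w₂)
    (hne : w₁ ≠ w₂) : G.dist w₁ w₂ = 2 := by
  have hconn := hT.isConnected
  have hW2 : (Walk.cons h1.symm (Walk.cons h2 Walk.nil) : G.Walk w₁ w₂).IsPath := by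
    simp [Walk.cons_isPath_iff, h1.ne', h2.ne, hne]
  have hle : G.dist w₁ w₂ ≤ 2 := by
    have := SimpleGraph.dist_le (Walk.cons h1.symm (Walk.cons h2 Walk.nil) : G.Walk w₁ w₂)
    simpa using this
  have h0 : G.dist w₁ w₂ ≠ 0 := fun hd => hne (hconn.dist_eq_zero_iff.mp hd)
  have h1' : G.dist w₁ w₂ ≠ 1 := by
    intro hd
    have hadj := SimpleGraph.dist_eq_one_iff_adj.mp hd
    have hP : (Walk.cons hadj Walk.nil : G.Walk w₁ w₂).IsPath := by
      simp [Walk.cons_isPath_iff, hadj.ne]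
    have heq := tree_path_unique hT _ _ hP hW2
    have := congrArg Walk.length heq
    simp at this
  omega

lemma tree_dist_three (hT : G.IsTree) {u v w x : V} (huv : G.Adj u v) (huw : G.Adj u w)
    (hvx : G.Adj v x) (hwv : w ≠ v) (hxu : x ≠ u) :
    G.dist w x = 2 ∨ G.dist w x = 3 := by
  have hconn := hT.isConnected
  have hwx : w ≠ x := by
    intro he
    subst he
    exact tree_no_triangle hT huv huw hvx.symm
  have hW3 : (Walk.cons huw.symm (Walk.cons huv (Walk.cons hvx Walk.nil)) :
      G.Walk w x).IsPath := by
    simp [Walk.cons_isPath_iff, huw.ne', huv.ne, hvx.ne, hwx, hwv, hxu, Ne.symm hxu]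
  have hle : G.dist w x ≤ 3 := by
    have := SimpleGraph.dist_le
      (Walk.cons huw.symm (Walk.cons huv (Walk.cons hvx Walk.nil)) : G.Walk w x)
    simpa using this
  have h0 : G.dist w x ≠ 0 := fun hd => hwx (hconn.dist_eq_zero_iff.mp hd)
  have h1 : G.dist w x ≠ 1 := by
    intro hd
    have hadj := SimpleGraph.dist_eq_one_iff_adj.mp hd
    have hP : (Walk.cons hadj Walk.nil : G.Walk w x).IsPath := by
      simp [Walk.cons_isPath_iff, hadj.ne]
    have heq := tree_path_unique hT _ _ hP hW3
    have := congrArg Walk.length heq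
    simp at this
  have h2 : G.dist w x ≠ 2 := by
    intro hd
    obtain ⟨q, hq⟩ := hconn.exists_walk_length_eq_dist w x
    rw [hd] at hq
    cases q with
    | nil => simp at hq
    | cons ha1 q1 =>
      cases q1 with
      | nil => simp at hq
      | cons ha2 q2 =>
        cases q2 with
        | nil =>
          have hP : (Walk.cons ha1 (Walk.cons ha2 Walk.nil) : G.Walk w x).IsPath := by
            simp [Walk.cons_isPath_iff, ha1.ne, ha2.ne, hwx]
          have heq := tree_path_unique hT _ _ hP hW3
          have := congrArg Walk.length heq
          simp at this
        | cons ha3 q3 => simp [Walk.length_cons] at hq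
  omega

end AuxHidden


theorem stmt0 {V : Type} [Fintype V] (G : SimpleGraph V) [DecidableRel G.Adj]
    (hT : G.IsTree) (hdiam : ∃ u v : V, 3 ≤ G.dist u v)
    (h p : ℕ) (hp : 1 ≤ p) (hph : p ≤ h) :
    max ((deltaTwo G - 1) * p) (h + (G.maxDegree - 1) * p) ≤ lambdaNum G h p := by
  classical
  obtain ⟨a0, b0, hab3⟩ := hdiam
  have hV : Nonempty V := ⟨a0⟩
  have hconn := hT.isConnected
  -- there is an edge
  obtain ⟨q, hq⟩ := SimpleGraph.exists_walk_of_dist_ne_zero (G := G) (u := a0) (v := b0)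
    (by omega)
  obtain ⟨u0, v0, huv0⟩ : ∃ u v : V, G.Adj u v := by
    cases q with
    | nil => simp at hq; rw [SimpleGraph.dist_self] at hab3; omega
    | cons hadj _ => exact ⟨_, _, hadj⟩
  -- the labelling set is nonempty
  have hkey : ∀ u v : V, u ≠ v →
      (h : ℤ) ≤ |((h * ((Fintype.equivFin V) u : ℕ) : ℕ) : ℤ) -
        ((h * ((Fintype.equivFin V) v : ℕ) : ℕ) : ℤ)| := by
    intro u v hne
    have hev : ((Fintype.equivFin V) u : ℕ) ≠ ((Fintype.equivFin V) v : ℕ) := by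
      intro he
      exact hne ((Fintype.equivFin V).injective (Fin.val_injective he))
    have h1 : (1 : ℤ) ≤ |(((Fintype.equivFin V) u : ℕ) : ℤ) -
        (((Fintype.equivFin V) v : ℕ) : ℤ)| := by
      have : (((Fintype.equivFin V) u : ℕ) : ℤ) - (((Fintype.equivFin V) v : ℕ) : ℤ) ≠ 0 := by
        intro he; apply hev; omega
      exact Int.one_le_abs (by omega)
    calc (h : ℤ) = (h : ℤ) * 1 := by ring
      _ ≤ (h : ℤ) * |(((Fintype.equivFin V) u : ℕ) : ℤ) -
          (((Fintype.equivFin V) v : ℕ) : ℤ)| := by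
        apply mul_le_mul_of_nonneg_left h1 (by positivity)
      _ = |((h * ((Fintype.equivFin V) u : ℕ) : ℕ) : ℤ) -
          ((h * ((Fintype.equivFin V) v : ℕ) : ℕ) : ℤ)| := by
        push_cast
        rw [← mul_sub, abs_mul, abs_of_nonneg (by positivity : (0:ℤ) ≤ (h:ℤ))]
  have hSne : {ℓ : ℕ | ∃ f : V → ℕ, IsLLabelling G h p ℓ f}.Nonempty := by
    refine ⟨h * Fintype.card V, fun v => h * ((Fintype.equivFin V) v : ℕ), ?_, ?_, ?_⟩
    · intro v
      exact Nat.mul_le_mul_left h (le_of_lt ((Fintype.equivFin V) v).isLt)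
    · intro u v hd
      have hne : u ≠ v := by
        intro he; subst he; rw [SimpleGraph.dist_self] at hd; omega
      exact hkey u v hne
    · intro u v hd
      have hne : u ≠ v := by
        intro he; subst he; rw [SimpleGraph.dist_self] at hd; omega
      calc (p : ℤ) ≤ (h : ℤ) := by exact_mod_cast hph
        _ ≤ _ := hkey u v hne
  have hmem : lambdaNum G h p ∈ {ℓ : ℕ | ∃ f : V → ℕ, IsLLabelling G h p ℓ f} :=
    Nat.sInf_mem hSne
  obtain ⟨f, hfb, hf1, hf23⟩ := hmem
  set ℓ₀ := lambdaNum G h p with hℓ₀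
  -- separation facts
  have sepAdj : ∀ {a b : V}, G.Adj a b → (p : ℤ) ≤ |(f a : ℤ) - (f b : ℤ)| := by
    intro a b hadj
    calc (p : ℤ) ≤ (h : ℤ) := by exact_mod_cast hph
      _ ≤ _ := hf1 a b (SimpleGraph.dist_eq_one_iff_adj.mpr hadj)
  have sepTwo : ∀ {c a b : V}, G.Adj c a → G.Adj c b → a ≠ b →
      (p : ℤ) ≤ |(f a : ℤ) - (f b : ℤ)| := by
    intro c a b h1 h2 hne
    exact hf23 a b (Or.inl (tree_dist_two hT h1 h2 hne))
  refine max_le ?_ ?_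
  · -- Δ₂ bound
    have hbdd : BddAbove {d : ℕ | ∃ u v : V, G.Adj u v ∧ d = G.degree u + G.degree v} := by
      refine ⟨2 * Fintype.card V, ?_⟩
      rintro d ⟨u, v, _, rfl⟩
      have h1 : G.degree u ≤ Fintype.card V := by
        rw [← SimpleGraph.card_neighborFinset_eq_degree]
        simpa using Finset.card_le_univ (G.neighborFinset u)
      have h2 : G.degree v ≤ Fintype.card V := by
        rw [← SimpleGraph.card_neighborFinset_eq_degree]
        simpa using Finset.card_le_univ (G.neighborFinset v)
      omega
    have hDmem : deltaTwo G ∈ {d : ℕ | ∃ u v : V, G.Adj u v ∧ d = G.degree u + G.degree v} :=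
      Nat.sSup_mem ⟨_, u0, v0, huv0, rfl⟩ hbdd
    obtain ⟨u, v, huv, hsum⟩ := hDmem
    set t := G.neighborFinset u ∪ G.neighborFinset v with ht
    have hdisj : Disjoint (G.neighborFinset u) (G.neighborFinset v) := by
      rw [Finset.disjoint_left]
      intro y hy1 hy2
      rw [SimpleGraph.mem_neighborFinset] at hy1 hy2
      exact tree_no_triangle hT huv hy1 hy2.symm
    have hcardt : t.card = G.degree u + G.degree v := by
      rw [ht, Finset.card_union_of_disjoint hdisj,
        SimpleGraph.card_neighborFinset_eq_degree, SimpleGraph.card_neighborFinset_eq_degree]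
    have cross : ∀ a b : V, G.Adj u a → G.Adj v b → a ≠ b →
        (p : ℤ) ≤ |(f a : ℤ) - (f b : ℤ)| := by
      intro a b hua hvb hab
      by_cases hav : a = v
      · subst hav
        exact sepAdj hvb
      · by_cases hbu : b = u
        · subst hbu
          rw [abs_sub_comm]
          exact sepAdj hua
        · exact hf23 a b (tree_dist_three hT huv hua hvb hav hbu)
    have hsepV : ∀ a ∈ t, ∀ b ∈ t, a ≠ b → (p : ℤ) ≤ |(f a : ℤ) - (f b : ℤ)| := by
      intro a ha b hb hab
      rw [ht, Finset.mem_union, SimpleGraph.mem_neighborFinset,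
        SimpleGraph.mem_neighborFinset] at ha hb
      rcases ha with ha | ha <;> rcases hb with hb | hb
      · exact sepTwo ha hb hab
      · exact cross a b ha hb hab
      · rw [abs_sub_comm]
        exact cross b a hb ha (Ne.symm hab)
      · exact sepTwo ha hb hab
    set s := t.image f with hs
    have hinj : Set.InjOn f ↑t := by
      intro a ha b hb he
      by_contra hab
      have := hsepV a ha b hb hab
      rw [he] at this
      simp at this
      omega
    have hcards : s.card = deltaTwo G := by
      rw [hs, Finset.card_image_of_injOn hinj, hcardt, hsum]
    have hnes : s.Nonempty := by
      refine Finset.image_nonempty.mpr ⟨v, ?_⟩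
      rw [ht, Finset.mem_union, SimpleGraph.mem_neighborFinset]
      exact Or.inl huv
    have hseps : ∀ a ∈ s, ∀ b ∈ s, a ≠ b → (p : ℤ) ≤ |(a : ℤ) - (b : ℤ)| := by
      intro a ha b hb hab
      obtain ⟨a', ha', rfl⟩ := Finset.mem_image.mp ha
      obtain ⟨b', hb', rfl⟩ := Finset.mem_image.mp hb
      exact hsepV a' ha' b' hb' (fun he => hab (by rw [he]))
    have hmain := lemA' p s hnes hseps
    have hmaxle : s.max' hnes ≤ ℓ₀ := by
      obtain ⟨w, _, hw⟩ := Finset.mem_image.mp (s.max'_mem hnes)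
      rw [← hw]
      exact hfb w
    rw [← hcards]
    omega
  · -- maxDegree bound
    obtain ⟨u, hu⟩ := G.exists_maximal_degree_vertex
    have hdegpos : 0 < G.degree u := by
      have h1 : 0 < G.degree u0 := G.degree_pos_iff_exists_adj u0 |>.mpr ⟨v0, huv0⟩
      have h2 := G.degree_le_maxDegree u0
      omega
    set t := G.neighborFinset u with ht
    set s := t.image f with hs
    have hsepV : ∀ a ∈ t, ∀ b ∈ t, a ≠ b → (p : ℤ) ≤ |(f a : ℤ) - (f b : ℤ)| := by
      intro a ha b hb hab
      rw [ht, SimpleGraph.mem_neighborFinset] at ha hb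
      exact sepTwo ha hb hab
    have hinj : Set.InjOn f ↑t := by
      intro a ha b hb he
      by_contra hab
      have := hsepV a ha b hb hab
      rw [he] at this
      simp at this
      omega
    have hcards : s.card = G.maxDegree := by
      rw [hs, Finset.card_image_of_injOn hinj, ht,
        SimpleGraph.card_neighborFinset_eq_degree, hu]
    have hnes : s.Nonempty := by
      rw [hs]
      refine Finset.image_nonempty.mpr ?_
      rw [ht, ← Finset.card_pos, SimpleGraph.card_neighborFinset_eq_degree]
      exact hdegpos
    have hseps : ∀ a ∈ s, ∀ b ∈ s, a ≠ b → (p : ℤ) ≤ |(a : ℤ) - (b : ℤ)| := by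
      intro a ha b hb hab
      obtain ⟨a', ha', rfl⟩ := Finset.mem_image.mp ha
      obtain ⟨b', hb', rfl⟩ := Finset.mem_image.mp hb
      exact hsepV a' ha' b' hb' (fun he => hab (by rw [he]))
    have hts : ∀ a ∈ s, (h : ℤ) ≤ |((f u : ℕ) : ℤ) - (a : ℤ)| := by
      intro a ha
      obtain ⟨w, hw, rfl⟩ := Finset.mem_image.mp ha
      rw [ht, SimpleGraph.mem_neighborFinset] at hw
      exact hf1 u w (SimpleGraph.dist_eq_one_iff_adj.mpr hw)
    have hle : ∀ a ∈ s, a ≤ ℓ₀ := by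
      intro a ha
      obtain ⟨w, _, rfl⟩ := Finset.mem_image.mp ha
      exact hfb w
    have := lemB p h ℓ₀ hp hph s hnes (f u) hseps hts hle (hfb u)
    rw [← hcards]
    exact this
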